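/- For every k ∈ ℕ, the mapping f ↦ ‖f‖_∞ + ‖D^k f‖_∞ is a norm on C_b^k(X) equivalent to the full norm ‖f‖_∞ + Σ_{j=1}^k ‖D^j f‖_∞. -/

import Mathlib

open Set

open Set

/-- One-dimensional Landau inequality with explicit step. -/
private lemma landau_step {E : Type*} [NormedAddCommGroup E] [NormedSpace ℝ E]
    (g g1 g2 : ℝ → E) (A B t : ℝ)
    (hg : ∀ s, HasDerivAt g (g1 s) s)
    (hg1 : ∀ s, HasDerivAt g1 (g2 s) s)
    (hA : ∀ s, ‖g s‖ ≤ A) (hB : ∀ s, ‖g2 s‖ ≤ B)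
    (ht : 0 < t) :
    ‖g1 0‖ ≤ 2 * A / t + t * B := by
  have hB0 : 0 ≤ B := le_trans (norm_nonneg _) (hB 0)
  have h1 : ∀ s ∈ Icc (0:ℝ) t, ‖g1 s - g1 0‖ ≤ B * (s - 0) :=
    norm_image_sub_le_of_norm_deriv_le_segment'
      (fun s _ => (hg1 s).hasDerivWithinAt) (fun s _ => hB s)
  set φ : ℝ → E := fun s => g s - s • g1 0 with hφdef
  have hφ : ∀ s ∈ Icc (0:ℝ) t, HasDerivWithinAt φ (g1 s - g1 0) (Icc 0 t) s := by
    intro s _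
    have hs1 : HasDerivAt (fun y : ℝ => y • g1 0) (g1 0) s := by
      simpa using (hasDerivAt_id s).smul_const (g1 0)
    exact ((hg s).sub hs1).hasDerivWithinAt
  have h2 : ‖φ t - φ 0‖ ≤ (B * t) * (t - 0) := by
    refine norm_image_sub_le_of_norm_deriv_le_segment' hφ (fun s hs => ?_) t
      (right_mem_Icc.2 ht.le)
    calc ‖g1 s - g1 0‖ ≤ B * (s - 0) := h1 s (Ico_subset_Icc_self hs)
    _ ≤ B * t := by nlinarith [hs.1, hs.2]
  have h3 : φ t - φ 0 = g t - g 0 - t • g1 0 := by simp only [hφdef]; abel_nf; simp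
  have h4 : t * ‖g1 0‖ ≤ 2 * A + B * t ^ 2 := by
    have : ‖t • g1 0‖ ≤ ‖g t - g 0‖ + ‖φ t - φ 0‖ := by
      rw [h3]
      have he : t • g1 0 = (g t - g 0) - (g t - g 0 - t • g1 0) := by abel
      calc ‖t • g1 0‖ = ‖(g t - g 0) - (g t - g 0 - t • g1 0)‖ := by rw [← he]
      _ ≤ _ := norm_sub_le _ _
    rw [norm_smul, Real.norm_eq_abs, abs_of_pos ht] at this
    have h5 : ‖g t - g 0‖ ≤ 2 * A := by
      calc ‖g t - g 0‖ ≤ ‖g t‖ + ‖g 0‖ := norm_sub_le _ _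
      _ ≤ 2 * A := by linarith [hA t, hA 0]
    nlinarith [h2]
  rw [div_add' _ _ _ ht.ne', le_div_iff₀ ht]
  nlinarith [h4]


private lemma deriv_rec {X : Type} [NormedAddCommGroup X] [NormedSpace ℝ X]
    {f : X → ℝ} {k m : ℕ} (hf : ContDiff ℝ k f) (hm : m + 2 ≤ k)
    {Nm N2 t : ℝ}
    (hNm : ∀ x, ‖iteratedFDeriv ℝ m f x‖ ≤ Nm)
    (hN2 : ∀ x, ‖iteratedFDeriv ℝ (m + 2) f x‖ ≤ N2)
    (ht : 0 < t) (x : X) :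
    ‖iteratedFDeriv ℝ (m + 1) f x‖ ≤ 2 * Nm / t + t * N2 := by
  have hNm0 : 0 ≤ Nm := le_trans (norm_nonneg _) (hNm x)
  have hN20 : 0 ≤ N2 := le_trans (norm_nonneg _) (hN2 x)
  set u := iteratedFDeriv ℝ m f with hu
  -- smoothness
  have hu2 : ContDiff ℝ 2 u := hf.iteratedFDeriv_right (by exact_mod_cast (by omega : 2 + m ≤ k))
  have hud : Differentiable ℝ u := hu2.differentiable (by norm_num)
  have hu1 : ContDiff ℝ 1 (fderiv ℝ u) := hu2.fderiv_right (by norm_num)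
  have hudd : Differentiable ℝ (fderiv ℝ u) := hu1.differentiable (by norm_num)
  rw [← norm_fderiv_iteratedFDeriv]
  refine ContinuousLinearMap.opNorm_le_bound _ (by positivity) (fun h => ?_)
  rcases eq_or_ne h 0 with rfl | hh
  · simp
  have hhn : (0:ℝ) < ‖h‖ := norm_pos_iff.2 hh
  set γ : ℝ → X := fun s => x + s • h with hγ
  have hγd : ∀ s, HasDerivAt γ h s := by
    intro s
    have h1 : HasDerivAt (fun s : ℝ => s • h) h s := by
      simpa using (hasDerivAt_id s).smul_const h
    exact h1.const_add x
  -- first derivative along the line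
  have hgd : ∀ s, HasDerivAt (fun s => u (γ s)) (fderiv ℝ u (γ s) h) s := fun s =>
    ((hud (γ s)).hasFDerivAt).comp_hasDerivAt s (hγd s)
  -- second derivative along the line
  have hg1d : ∀ s, HasDerivAt (fun s => fderiv ℝ u (γ s) h)
      ((fderiv ℝ (fderiv ℝ u) (γ s) h) h) s := by
    intro s
    have h1 : HasDerivAt (fun s => fderiv ℝ u (γ s)) (fderiv ℝ (fderiv ℝ u) (γ s) h) s :=
      HasFDerivAt.comp_hasDerivAt (l := fderiv ℝ u) s (hudd (γ s)).hasFDerivAt (hγd s)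
    simpa using h1.clm_apply (hasDerivAt_const s h)
  -- bound on the second derivative
  have hB : ∀ s, ‖(fderiv ℝ (fderiv ℝ u) (γ s) h) h‖ ≤ (N2 * ‖h‖ ^ 2) := by
    intro s
    have hrw : fderiv ℝ u = (continuousMultilinearCurryLeftEquiv ℝ
        (fun _ : Fin (m + 1) => X) ℝ) ∘ iteratedFDeriv ℝ (m + 1) f := fderiv_iteratedFDeriv
    rw [show fderiv ℝ (fderiv ℝ u) (γ s) =
        (((continuousMultilinearCurryLeftEquiv ℝ (fun _ : Fin (m + 1) => X) ℝ).toContinuousLinearEquiv :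
          (X [×m+1]→L[ℝ] ℝ) →L[ℝ] (X →L[ℝ] X [×m]→L[ℝ] ℝ))).comp
          (fderiv ℝ (iteratedFDeriv ℝ (m + 1) f) (γ s)) by
      rw [hrw]
      have e2 := @LinearIsometryEquiv.comp_fderiv ℝ _ (ContinuousMultilinearMap ℝ (fun _ : Fin (m + 1) => X) ℝ) _ _ (X →L[ℝ] X [×m]→L[ℝ] ℝ) _ _ X _ _
        (continuousMultilinearCurryLeftEquiv ℝ (fun _ : Fin (m + 1) => X) ℝ) (iteratedFDeriv ℝ (m + 1) f) (γ s)
      exact e2]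
    simp only [ContinuousLinearMap.coe_comp', Function.comp_apply]
    calc ‖(continuousMultilinearCurryLeftEquiv ℝ (fun _ : Fin (m + 1) => X) ℝ)
          (fderiv ℝ (iteratedFDeriv ℝ (m + 1) f) (γ s) h) h‖
        ≤ ‖(continuousMultilinearCurryLeftEquiv ℝ (fun _ : Fin (m + 1) => X) ℝ)
          (fderiv ℝ (iteratedFDeriv ℝ (m + 1) f) (γ s) h)‖ * ‖h‖ :=
          ContinuousLinearMap.le_opNorm _ _
      _ = ‖fderiv ℝ (iteratedFDeriv ℝ (m + 1) f) (γ s) h‖ * ‖h‖ := by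
          rw [LinearIsometryEquiv.norm_map]
      _ ≤ (‖fderiv ℝ (iteratedFDeriv ℝ (m + 1) f) (γ s)‖ * ‖h‖) * ‖h‖ := by
          gcongr; exact ContinuousLinearMap.le_opNorm _ _
      _ = ‖iteratedFDeriv ℝ (m + 2) f (γ s)‖ * ‖h‖ * ‖h‖ := by
          rw [norm_fderiv_iteratedFDeriv]
      _ ≤ N2 * ‖h‖ ^ 2 := by nlinarith [hN2 (γ s), norm_nonneg h]
  have key := landau_step (fun s => u (γ s)) (fun s => fderiv ℝ u (γ s) h)
      (fun s => (fderiv ℝ (fderiv ℝ u) (γ s) h) h) Nm (N2 * ‖h‖ ^ 2) (t / ‖h‖)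
      hgd hg1d (fun s => hNm (γ s)) hB (by positivity)
  have hγ0 : γ 0 = x := by simp [hγ]
  simp only [hγ0] at key
  calc ‖fderiv ℝ u x h‖ ≤ 2 * Nm / (t / ‖h‖) + t / ‖h‖ * (N2 * ‖h‖ ^ 2) := key
    _ = (2 * Nm / t + t * N2) * ‖h‖ := by field_simp


private noncomputable def landauC : ℕ → ℝ
  | 0 => 1
  | (k + 1) => 16 * (landauC k) ^ 2

private lemma landauC_ge_one (k : ℕ) : 1 ≤ landauC k := by
  induction k with
  | zero => simp [landauC]
  | succ k ih => simp only [landauC]; nlinarith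

private lemma landau_numrec (k : ℕ) (N : ℕ → ℝ) (hN : ∀ j, 0 ≤ N j)
    (hrec : ∀ j t, j + 2 ≤ k → 0 < t → N (j + 1) ≤ 2 * N j / t + t * N (j + 2)) :
    ∀ j ≤ k, N j ≤ landauC k * (N 0 + N k) := by
  induction k with
  | zero =>
    intro j hj
    interval_cases j
    simp only [landauC]
    nlinarith [hN 0]
  | succ k ih =>
    have hc1 : 1 ≤ landauC k := landauC_ge_one k
    have ihk := ih (fun j t hj ht => hrec j t (by omega) ht)
    -- absorption: N k ≤ N 0 + 11 * landauC k * N (k+1)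
    have habs : N k ≤ N 0 + 11 * landauC k * N (k + 1) := by
      rcases Nat.eq_zero_or_pos k with rfl | hk
      · nlinarith [hN 0, hN 1]
      · obtain ⟨l, rfl⟩ : ∃ l, k = l + 1 := ⟨k - 1, by omega⟩
        have h1 := hrec l (8 * landauC (l + 1)) (by omega) (by nlinarith)
        have h2 := ihk l (by omega)
        have h3 := hN (l + 2)
        have h4 := hN 0
        have hc := landauC_ge_one (l + 1)
        have h5 := ihk (l + 1) le_rfl
        -- we need N (l+1) at index l in h1? hrec j=l gives N (l+1) ≤ 2 N l / t + t N (l+2)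
        -- that's the wrong one; we need j = l : N(l+1) relates N l and N (l+2) = N (k+1). good: k = l+1
        have hreww : 2 * N l / (8 * landauC (l + 1)) = N l / (4 * landauC (l + 1)) := by
          ring
        have h6 : N (l + 1) ≤ N l / (4 * landauC (l + 1)) + 8 * landauC (l + 1) * N (l + 2) := by
          rw [← hreww]; exact h1
        have h7 : N l ≤ landauC (l + 1) * (N 0 + N (l + 1)) := ihk l (by omega)
        have hcpos : 0 < landauC (l + 1) := by linarith
        have h8 : N l / (4 * landauC (l + 1)) ≤ (N 0 + N (l + 1)) / 4 := by
          rw [div_le_div_iff₀ (by positivity) (by norm_num)]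
          nlinarith
        have h9 : N (l + 1) ≤ (N 0 + N (l + 1)) / 4 + 8 * landauC (l + 1) * N (l + 2) := by
          linarith
        nlinarith [hN (l + 1)]
    intro j hj
    have hck1 : landauC (k + 1) = 16 * (landauC k) ^ 2 := rfl
    rcases Nat.lt_or_ge j (k + 1) with hjk | hjk
    · have := ihk j (by omega)
      have h0 := hN 0
      have hk1 := hN (k + 1)
      have hk0 := hN k
      rw [hck1]
      nlinarith [mul_le_mul_of_nonneg_left habs (by linarith : (0:ℝ) ≤ landauC k),
        mul_nonneg (mul_nonneg (by linarith : (0:ℝ) ≤ landauC k) (by linarith : (0:ℝ) ≤ landauC k)) hk1,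
        sq_nonneg (landauC k), mul_nonneg h0 (by linarith : (0:ℝ) ≤ landauC k),
        mul_le_mul_of_nonneg_right (by nlinarith : (1:ℝ) ≤ landauC k ^ 2) hk1,
        mul_le_mul_of_nonneg_right (by nlinarith : (1:ℝ) ≤ landauC k ^ 2) h0]
    · have : j = k + 1 := by omega
      subst this
      have h0 := hN 0
      have hk1 := hN (k + 1)
      rw [hck1]
      nlinarith [mul_le_mul_of_nonneg_right (by nlinarith : (1:ℝ) ≤ 16 * landauC k ^ 2) hk1,
        mul_nonneg (by nlinarith : (0:ℝ) ≤ 16 * landauC k ^ 2) h0]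

/-- On C_b^k(X), the mapping f ↦ ‖f‖_∞ + ‖D^k f‖_∞ is a norm equivalent to the full
norm ‖f‖_∞ + Σ_{j=1}^k ‖D^j f‖_∞ : there is C > 0 such that the full norm is bounded
by C (‖f‖_∞ + ‖D^k f‖_∞), and conversely ‖f‖_∞ + ‖D^k f‖_∞ is bounded by C times
the full norm. -/
theorem stmt5 (k : ℕ) :
    ∃ C : ℝ, 0 < C ∧
      ∀ (X : Type) [NormedAddCommGroup X] [NormedSpace ℝ X]
        (f : X → ℝ) (Mf Mk Msum : ℝ),
        ContDiff ℝ k f →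
        (∀ j : ℕ, j ≤ k → ∃ Mj : ℝ, ∀ x, ‖iteratedFDeriv ℝ j f x‖ ≤ Mj) →
        (∀ x, |f x| ≤ Mf) →
        (∀ x, ‖iteratedFDeriv ℝ k f x‖ ≤ Mk) →
        (∀ x, |f x| + ∑ j ∈ Finset.Icc 1 k, ‖iteratedFDeriv ℝ j f x‖ ≤ Msum) →
        (∀ x, |f x| + ∑ j ∈ Finset.Icc 1 k, ‖iteratedFDeriv ℝ j f x‖ ≤ C * (Mf + Mk)) ∧
        (∀ x, |f x| + ‖iteratedFDeriv ℝ k f x‖ ≤ C * Msum) := by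
  have hc1 := landauC_ge_one k
  have hkc : 0 ≤ (k : ℝ) * landauC k := mul_nonneg (Nat.cast_nonneg k) (by linarith)
  refine ⟨2 + (k : ℝ) * landauC k, by linarith, ?_⟩
  intro X _ _ f Mf Mk Msum hf hbdd hMf hMk hMsum
  constructor
  · intro x
    haveI : Nonempty X := ⟨x⟩
    set N : ℕ → ℝ := fun j => ⨆ y, ‖iteratedFDeriv ℝ j f y‖ with hNdef
    have hbddA : ∀ j, j ≤ k → BddAbove (Set.range fun y => ‖iteratedFDeriv ℝ j f y‖) := by
      intro j hj
      obtain ⟨Mj, hMj⟩ := hbdd j hj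
      exact ⟨Mj, by rintro _ ⟨y, rfl⟩; exact hMj y⟩
    have hNle : ∀ j, j ≤ k → ∀ y, ‖iteratedFDeriv ℝ j f y‖ ≤ N j := fun j hj y =>
      le_ciSup (hbddA j hj) y
    have hN0 : ∀ j, 0 ≤ N j := fun j => Real.iSup_nonneg fun y => norm_nonneg _
    have hNub : ∀ (j : ℕ) (M : ℝ), (∀ y, ‖iteratedFDeriv ℝ j f y‖ ≤ M) → N j ≤ M :=
      fun j M hM => ciSup_le hM
    have hrec : ∀ (j : ℕ) (t : ℝ), j + 2 ≤ k → 0 < t →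
        N (j + 1) ≤ 2 * N j / t + t * N (j + 2) := by
      intro j t hj ht
      exact ciSup_le fun y =>
        deriv_rec hf hj (fun z => hNle j (by omega) z) (fun z => hNle (j + 2) hj z) ht y
    have hmain := landau_numrec k N hN0 hrec
    have hN0f : N 0 ≤ Mf := hNub 0 Mf fun y => by
      rw [norm_iteratedFDeriv_zero, Real.norm_eq_abs]; exact hMf y
    have hNk : N k ≤ Mk := hNub k Mk hMk
    have hMf0 : 0 ≤ Mf := le_trans (abs_nonneg _) (hMf x)
    have hMk0 : 0 ≤ Mk := le_trans (norm_nonneg _) (hMk x)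
    have hsum : ∑ j ∈ Finset.Icc 1 k, ‖iteratedFDeriv ℝ j f x‖ ≤
        ∑ j ∈ Finset.Icc 1 k, landauC k * (Mf + Mk) := by
      refine Finset.sum_le_sum fun j hj => ?_
      have hjk : j ≤ k := (Finset.mem_Icc.1 hj).2
      calc ‖iteratedFDeriv ℝ j f x‖ ≤ N j := hNle j hjk x
        _ ≤ landauC k * (N 0 + N k) := hmain j hjk
        _ ≤ landauC k * (Mf + Mk) := by
            apply mul_le_mul_of_nonneg_left _ (by linarith)
            have := hN0 0; have := hN0 k
            linarith
    have hcard : ∑ j ∈ Finset.Icc 1 k, landauC k * (Mf + Mk) =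
        (k : ℝ) * (landauC k * (Mf + Mk)) := by
      rw [Finset.sum_const, Nat.card_Icc]
      simp [nsmul_eq_mul]
    calc |f x| + ∑ j ∈ Finset.Icc 1 k, ‖iteratedFDeriv ℝ j f x‖
        ≤ Mf + (k : ℝ) * (landauC k * (Mf + Mk)) := by
          rw [← hcard]; exact add_le_add (hMf x) hsum
      _ ≤ (2 + (k : ℝ) * landauC k) * (Mf + Mk) := by nlinarith
  · intro x
    have hMs := hMsum x
    have hsumnn : 0 ≤ ∑ j ∈ Finset.Icc 1 k, ‖iteratedFDeriv ℝ j f x‖ :=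
      Finset.sum_nonneg fun j _ => norm_nonneg _
    have hMsum0 : 0 ≤ Msum := le_trans (by positivity) hMs
    rcases Nat.eq_zero_or_pos k with rfl | hk
    · have h0 : ‖iteratedFDeriv ℝ 0 f x‖ = |f x| := by
        rw [norm_iteratedFDeriv_zero, Real.norm_eq_abs]
      have hfx : |f x| ≤ Msum := by simpa using hMs
      rw [h0]
      simp only [Nat.cast_zero, zero_mul, add_zero]
      linarith
    · have hk1 : ‖iteratedFDeriv ℝ k f x‖ ≤ ∑ j ∈ Finset.Icc 1 k, ‖iteratedFDeriv ℝ j f x‖ :=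
        Finset.single_le_sum (f := fun j => ‖iteratedFDeriv ℝ j f x‖)
          (fun i _ => norm_nonneg _) (Finset.mem_Icc.2 ⟨hk, le_rfl⟩)
      calc |f x| + ‖iteratedFDeriv ℝ k f x‖ ≤ Msum := by linarith
        _ ≤ (2 + (k : ℝ) * landauC k) * Msum :=
          le_mul_of_one_le_left hMsum0 (by linarith)
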